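/- Let n ≥ 1 and ϖ ≥ 1 be integers and s ∈ ℝⁿ, and consider the AP-A sequences defined by a_0 = 0, m_0 = P_{≥|s|}(a_0) = |s|, and for i ≥ 1: b_i = P_ϖ(m_{i−1} − a_{i−1}), λ_i = ‖m_{i−1} − a_{i−1}‖₂² / ‖b_i‖₂² (with λ_i := 0 if b_i = 0), a_i = a_{i−1} + λ_i·b_i, and m_i = P_{≥|s|}(a_i). Assume that for every i ≥ 1, b_i = 0 implies m_{i−1} = a_{i−1}. Then there exists m† ∈ S_{≥|s|} ∩ S_ϖ such that the sequence (m_i) converges to m† and ‖m_{i+1} − m†‖₂ ≤ ‖m_i − m†‖₂ for all i ≥ 0. -/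

import Mathlib

open scoped BigOperators

noncomputable section

/-- Low-frequency index set `K_ω ⊆ {0,…,n−1}`. -/
def Kset (n ω : ℕ) : Set (Fin n) := {k | (k : ℕ) ≤ ω - 1 ∨ n - ω + 1 ≤ (k : ℕ)}

/-- The set of ω-bandlimited real vectors `S_ω`. -/
def Sband (n ω : ℕ) : Set (EuclideanSpace ℝ (Fin n)) :=
  {x | ∀ k : Fin n, k ∉ Kset n ω →
    ∑ j : Fin n, (x j : ℂ) *
      Complex.exp (-(2 * (Real.pi : ℂ) * Complex.I * ((j : ℕ) : ℂ) * ((k : ℕ) : ℂ)) / (n : ℂ)) = 0}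

/-- The constraint set `S_{≥|s|}`. -/
def Sgeq (n : ℕ) (s : EuclideanSpace ℝ (Fin n)) : Set (EuclideanSpace ℝ (Fin n)) :=
  {x | ∀ j, |s j| ≤ x j}

/-- The metric projection onto `S_{≥|s|}`: componentwise `max(z_j, |s_j|)`. -/
def Pgeq (n : ℕ) (s z : EuclideanSpace ℝ (Fin n)) : EuclideanSpace ℝ (Fin n) :=
  (WithLp.equiv 2 (Fin n → ℝ)).symm (fun j => max (z j) |s j|)

/-- The rectangular low-pass filter `P_ϖ` (the orthogonal projection onto `S_ϖ`):
`(P_ϖ z)_j = (1/n)·Σ_{k∈K_ϖ} Σ_{l} z_l·cos(2πk(j−l)/n)`. -/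
def Pband (n ϖ : ℕ) (z : EuclideanSpace ℝ (Fin n)) : EuclideanSpace ℝ (Fin n) :=
  (WithLp.equiv 2 (Fin n → ℝ)).symm (fun j =>
    (1 / (n : ℝ)) *
      ∑ k ∈ Finset.univ.filter (fun k : Fin n => (k : ℕ) ≤ ϖ - 1 ∨ n - ϖ + 1 ≤ (k : ℕ)),
        ∑ l : Fin n, z l * Real.cos (2 * Real.pi * (k : ℕ) * (((j : ℕ) : ℝ) - ((l : ℕ) : ℝ)) / (n : ℝ)))


open Finset

/-! ### auxiliary DFT lemmas -/

lemma sum_zeta (n : ℕ) (hn : 0 < n) (m : ℤ) :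
    ∑ l : Fin n, Complex.exp ((2 * Real.pi * m / n) * Complex.I) ^ (l : ℕ) =
      if (n:ℤ) ∣ m then (n:ℂ) else 0 := by
  have hne : (n:ℂ) ≠ 0 := by exact_mod_cast Nat.cast_ne_zero.mpr hn.ne'
  by_cases h : (n:ℤ) ∣ m
  · obtain ⟨q, hq⟩ := h
    have h1 : Complex.exp ((2 * Real.pi * m / n) * Complex.I) = 1 := by
      rw [show ((2 * (Real.pi:ℂ) * m / n) * Complex.I) = (q:ℤ) * (2 * Real.pi * Complex.I) by
        rw [hq]; push_cast; field_simp]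
      exact Complex.exp_int_mul_two_pi_mul_I q
    rw [if_pos ⟨q, hq⟩]
    simp [h1]
  · rw [if_neg h]
    set ζ := Complex.exp ((2 * Real.pi * m / n) * Complex.I) with hζ
    have hζn : ζ ^ n = 1 := by
      rw [hζ, ← Complex.exp_nat_mul]
      rw [show (n:ℂ) * ((2 * Real.pi * m / n) * Complex.I) = (m:ℤ) * (2 * Real.pi * Complex.I) by
        push_cast; field_simp]
      exact Complex.exp_int_mul_two_pi_mul_I m
    have hπI : (2 * (Real.pi:ℂ) * Complex.I) ≠ 0 := by
      simp [Real.pi_ne_zero, Complex.I_ne_zero, Complex.ext_iff]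
    have hζ1 : ζ ≠ 1 := by
      intro hone
      rw [hζ, Complex.exp_eq_one_iff] at hone
      obtain ⟨k, hk⟩ := hone
      have h2 : ((m:ℂ)/n) = k := mul_right_cancel₀ hπI (by linear_combination hk)
      have h3 : (m:ℂ) = ((n * k : ℤ):ℂ) := by
        push_cast
        field_simp at h2
        linear_combination h2
      exact h ⟨k, by exact_mod_cast h3⟩
    rw [Fin.sum_univ_eq_sum_range, geom_sum_eq hζ1, hζn]
    simp

lemma sum_cos (n : ℕ) (hn : 0 < n) (m : ℤ) (φ : ℝ) :
    ∑ l : Fin n, Real.cos (2 * Real.pi * m / n * l + φ) =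
      if (n:ℤ) ∣ m then n * Real.cos φ else 0 := by
  have key : ∀ l : Fin n,
      Real.cos (2 * Real.pi * m / n * l + φ) =
      (Complex.exp ((φ:ℝ) * Complex.I) * Complex.exp ((2 * Real.pi * m / n) * Complex.I) ^ (l:ℕ)).re := by
    intro l
    rw [← Complex.exp_nat_mul, ← Complex.exp_add]
    rw [show ((φ:ℝ):ℂ) * Complex.I + (l:ℕ) * ((2 * Real.pi * m / n) * Complex.I)
        = ((2 * Real.pi * m / n * l + φ : ℝ):ℂ) * Complex.I by push_cast; ring]
    exact (Complex.exp_ofReal_mul_I_re _).symm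
  simp only [key]
  rw [← Complex.re_sum, ← Finset.mul_sum, sum_zeta n hn m]
  by_cases h : (n:ℤ) ∣ m
  · rw [if_pos h, if_pos h]
    rw [show (Complex.exp ((φ:ℝ) * Complex.I) * (n:ℂ)) = ((n:ℝ):ℂ) * Complex.exp ((φ:ℝ) * Complex.I) by
      push_cast; ring]
    rw [Complex.re_ofReal_mul, Complex.exp_ofReal_mul_I_re]
  · rw [if_neg h, if_neg h]; simp

lemma sum_exp_lin (n : ℕ) (hn : 0 < n) (m : ℤ) (hm : ¬ (n:ℤ) ∣ m) (c : ℂ) :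
    ∑ j : Fin n, Complex.exp ((2 * Real.pi * m / n) * Complex.I * (j:ℕ) + c) = 0 := by
  have key : ∀ j : Fin n,
      Complex.exp ((2 * Real.pi * m / n) * Complex.I * (j:ℕ) + c)
      = Complex.exp c * Complex.exp ((2 * Real.pi * m / n) * Complex.I) ^ (j:ℕ) := by
    intro j
    rw [← Complex.exp_nat_mul, ← Complex.exp_add]
    ring_nf
  simp only [key]
  rw [← Finset.mul_sum, sum_zeta n hn m, if_neg hm, mul_zero]

lemma cos_mul_cos (a b : ℝ) :
    Real.cos a * Real.cos b = (Real.cos (a - b) + Real.cos (a + b)) / 2 := by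
  rw [Real.cos_sub, Real.cos_add]; ring

lemma dvd_sub_iff (n : ℕ) (k k' : Fin n) : (n:ℤ) ∣ (((k':ℕ):ℤ) - ((k:ℕ):ℤ)) ↔ k' = k := by
  constructor
  · rintro ⟨c, hc⟩
    have hk : ((k:ℕ):ℤ) < n := by exact_mod_cast k.2
    have hk' : ((k':ℕ):ℤ) < n := by exact_mod_cast k'.2
    have hk0 : (0:ℤ) ≤ ((k:ℕ):ℤ) := Int.natCast_nonneg _
    have hk0' : (0:ℤ) ≤ ((k':ℕ):ℤ) := Int.natCast_nonneg _
    have hn0 : (0:ℤ) < n := by omega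
    have hc0 : c = 0 := by nlinarith
    rw [hc0, mul_zero] at hc
    have : ((k':ℕ):ℤ) = ((k:ℕ):ℤ) := by omega
    exact Fin.ext (by exact_mod_cast this)
  · rintro rfl; simp

lemma dvd_add_cases (n : ℕ) (k k' : Fin n) (h : (n:ℤ) ∣ (((k:ℕ) + (k':ℕ) : ℕ) : ℤ)) :
    ((k:ℕ) = 0 ∧ (k':ℕ) = 0) ∨ (k:ℕ) + (k':ℕ) = n := by
  have h' : n ∣ (k:ℕ) + (k':ℕ) := by exact_mod_cast h
  obtain ⟨c, hc⟩ := h'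
  have h1 := k.2; have h2 := k'.2
  have hc2 : c < 2 := by
    by_contra hcon
    push_neg at hcon
    have : n * 2 ≤ n * c := Nat.mul_le_mul_left n hcon
    omega
  interval_cases c <;> omega

lemma key_l_sum (n : ℕ) (hn : 0 < n) (k k' : Fin n) (x y : ℝ) :
    ∑ l : Fin n, Real.cos (2 * Real.pi * (k':ℕ) * ((l:ℝ) - y) / n) *
      Real.cos (2 * Real.pi * (k:ℕ) * (x - (l:ℝ)) / n)
    = (if (n:ℤ) ∣ (((k:ℕ) + (k':ℕ) : ℕ) : ℤ) then
        (n/2 : ℝ) * Real.cos (2 * Real.pi * ((k':ℝ)*y + (k:ℝ)*x) / n) else 0)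
      + (if k' = k then (n/2 : ℝ) * Real.cos (2 * Real.pi * (k:ℕ) * (x - y) / n) else 0) := by
  have expand : ∀ l : Fin n,
      Real.cos (2 * Real.pi * (k':ℕ) * ((l:ℝ) - y) / n) *
        Real.cos (2 * Real.pi * (k:ℕ) * (x - (l:ℝ)) / n)
      = (Real.cos (2 * Real.pi * ((((k:ℕ) + (k':ℕ) : ℕ):ℤ):ℝ) / n * l + (-(2 * Real.pi * ((k':ℝ)*y + (k:ℝ)*x) / n)))
        + Real.cos (2 * Real.pi * (((((k':ℕ):ℤ) - ((k:ℕ):ℤ)):ℤ):ℝ) / n * l + (2 * Real.pi * ((k:ℝ)*x - (k':ℝ)*y) / n))) / 2 := by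
    intro l
    rw [cos_mul_cos]
    congr 2 <;> push_cast <;> ring
  simp only [expand]
  rw [← Finset.sum_div, Finset.sum_add_distrib,
    sum_cos n hn (((k:ℕ) + (k':ℕ) : ℕ) : ℤ) _, sum_cos n hn ((((k':ℕ):ℤ) - ((k:ℕ):ℤ))) _]
  rw [Real.cos_neg]
  simp only [dvd_sub_iff n k k']
  split_ifs with h1 h2 h2
  · subst h2; push_cast; ring_nf
  · push_cast; ring_nf
  · subst h2; push_cast; ring_nf
  · ring

variable {n ϖ : ℕ}

def Kfin (n ϖ : ℕ) : Finset (Fin n) :=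
  Finset.univ.filter (fun k : Fin n => (k : ℕ) ≤ ϖ - 1 ∨ n - ϖ + 1 ≤ (k : ℕ))

lemma mem_Kfin {k : Fin n} : k ∈ Kfin n ϖ ↔ ((k : ℕ) ≤ ϖ - 1 ∨ n - ϖ + 1 ≤ (k : ℕ)) := by
  simp [Kfin]

lemma pband_apply (z : EuclideanSpace ℝ (Fin n)) (j : Fin n) :
    Pband n ϖ z j = (1 / (n : ℝ)) *
      ∑ k ∈ Kfin n ϖ, ∑ l : Fin n,
        z l * Real.cos (2 * Real.pi * (k : ℕ) * (((j : ℕ) : ℝ) - ((l : ℕ) : ℝ)) / (n : ℝ)) := rfl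

lemma euc_inner (x y : EuclideanSpace ℝ (Fin n)) : (inner ℝ x y : ℝ) = ∑ j, x j * y j := by
  simp [PiLp.inner_apply, RCLike.inner_apply, mul_comm]

def kneg (n : ℕ) (hn : 0 < n) (k : Fin n) : Fin n :=
  if h : (k:ℕ) = 0 then ⟨0, hn⟩ else ⟨n - (k:ℕ), by have := k.2; omega⟩

lemma kneg_val_zero (hn : 0 < n) {k : Fin n} (h : (k:ℕ) = 0) : ((kneg n hn k : Fin n) : ℕ) = 0 := by
  simp [kneg, h]

lemma kneg_val_pos (hn : 0 < n) {k : Fin n} (h : (k:ℕ) ≠ 0) :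
    ((kneg n hn k : Fin n) : ℕ) = n - (k:ℕ) := by
  simp [kneg, h]

lemma kneg_mem (hn : 0 < n) (hϖ : 1 ≤ ϖ) {k : Fin n} (hk : k ∈ Kfin n ϖ) :
    kneg n hn k ∈ Kfin n ϖ := by
  rw [mem_Kfin] at hk ⊢
  by_cases h : (k:ℕ) = 0
  · rw [kneg_val_zero hn h]; left; omega
  · rw [kneg_val_pos hn h]; have := k.2; omega

lemma key_k_sum (hn : 0 < n) (hϖ : 1 ≤ ϖ) (k : Fin n) (hk : k ∈ Kfin n ϖ) (x : ℝ) (yi : ℕ) :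
    ∑ k' ∈ Kfin n ϖ,
      ((if (n:ℤ) ∣ (((k:ℕ) + (k':ℕ) : ℕ) : ℤ) then
          (n/2 : ℝ) * Real.cos (2 * Real.pi * ((k':ℝ)*(yi:ℝ) + (k:ℝ)*x) / n) else 0)
        + (if k' = k then (n/2 : ℝ) * Real.cos (2 * Real.pi * (k:ℕ) * (x - (yi:ℝ)) / n) else 0))
    = (n : ℝ) * Real.cos (2 * Real.pi * (k:ℕ) * (x - (yi:ℝ)) / n) := by
  rw [Finset.sum_add_distrib]
  have h2 : ∑ k' ∈ Kfin n ϖ,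
      (if k' = k then (n/2 : ℝ) * Real.cos (2 * Real.pi * (k:ℕ) * (x - (yi:ℝ)) / n) else 0)
      = (n/2 : ℝ) * Real.cos (2 * Real.pi * (k:ℕ) * (x - (yi:ℝ)) / n) := by
    rw [Finset.sum_ite_eq' (Kfin n ϖ) k, if_pos hk]
  have h1 : ∑ k' ∈ Kfin n ϖ,
      (if (n:ℤ) ∣ (((k:ℕ) + (k':ℕ) : ℕ) : ℤ) then
          (n/2 : ℝ) * Real.cos (2 * Real.pi * ((k':ℝ)*(yi:ℝ) + (k:ℝ)*x) / n) else 0)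
      = (n/2 : ℝ) * Real.cos (2 * Real.pi * (k:ℕ) * (x - (yi:ℝ)) / n) := by
    rw [Finset.sum_eq_single (kneg n hn k)]
    · by_cases h : (k:ℕ) = 0
      · have hdvd : (n:ℤ) ∣ (((k:ℕ) + ((kneg n hn k):ℕ) : ℕ) : ℤ) := by
          rw [kneg_val_zero hn h, h]; simp
        rw [if_pos hdvd, kneg_val_zero hn h, h]
        norm_num
      · have hkn := k.2
        have hsum : (k:ℕ) + ((kneg n hn k):ℕ) = n := by rw [kneg_val_pos hn h]; omega
        have hdvd : (n:ℤ) ∣ (((k:ℕ) + ((kneg n hn k):ℕ) : ℕ) : ℤ) := by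
          rw [hsum]
        rw [if_pos hdvd]
        have hne : (n:ℝ) ≠ 0 := by positivity
        have hcast : (((kneg n hn k : Fin n)):ℝ) = (n:ℝ) - ((k:ℕ):ℝ) := by
          rw [show (((kneg n hn k : Fin n)):ℝ) = (((kneg n hn k : Fin n) : ℕ):ℝ) from rfl,
            kneg_val_pos hn h]
          push_cast [Nat.cast_sub (le_of_lt hkn)]
          ring
        rw [hcast]
        congr 1
        rw [show 2 * Real.pi * (((n:ℝ) - ((k:ℕ):ℝ))*(yi:ℝ) + ((k:ℕ):ℝ)*x) / n
            = 2 * Real.pi * ((k:ℕ):ℝ) * (x - (yi:ℝ)) / n + ((yi:ℤ):ℝ) * (2*Real.pi) by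
          push_cast; field_simp; ring]
        exact Real.cos_add_int_mul_two_pi _ (yi:ℤ)
    · intro b hb hbne
      rw [if_neg]
      intro hd
      rcases dvd_add_cases n k b hd with ⟨hk0, hb0⟩ | hkb
      · exact hbne (Fin.ext (by rw [hb0, kneg_val_zero hn hk0]))
      · have h : (k:ℕ) ≠ 0 := by
          intro h0; rw [h0] at hkb; have := b.2; omega
        exact hbne (Fin.ext (by rw [kneg_val_pos hn h]; omega))
    · intro h; exact absurd (kneg_mem hn hϖ hk) h
  rw [h1, h2]; ring

lemma inner_swap (hn : 0 < n) (hϖ : 1 ≤ ϖ) (z : EuclideanSpace ℝ (Fin n)) (j : Fin n)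
    {k : Fin n} (hk : k ∈ Kfin n ϖ) :
    ∑ l : Fin n, (Pband n ϖ z) l * Real.cos (2 * Real.pi * (k:ℕ) * (((j:ℕ):ℝ) - ((l:ℕ):ℝ)) / n)
    = ∑ l' : Fin n, z l' * Real.cos (2 * Real.pi * (k:ℕ) * (((j:ℕ):ℝ) - ((l':ℕ):ℝ)) / n) := by
  have hne : (n:ℝ) ≠ 0 := by positivity
  calc
    ∑ l : Fin n, (Pband n ϖ z) l * Real.cos (2 * Real.pi * (k:ℕ) * (((j:ℕ):ℝ) - ((l:ℕ):ℝ)) / n)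
        = ∑ l : Fin n, ∑ k' ∈ Kfin n ϖ, ∑ l' : Fin n,
            ((1/(n:ℝ)) * z l') * (Real.cos (2 * Real.pi * (k':ℕ) * (((l:ℕ):ℝ) - ((l':ℕ):ℝ)) / n)
              * Real.cos (2 * Real.pi * (k:ℕ) * (((j:ℕ):ℝ) - ((l:ℕ):ℝ)) / n)) := by
        apply Finset.sum_congr rfl
        intro l _
        rw [pband_apply, mul_assoc, Finset.sum_mul, Finset.mul_sum]
        apply Finset.sum_congr rfl
        intro k' _
        rw [Finset.sum_mul, Finset.mul_sum]
        apply Finset.sum_congr rfl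
        intro l' _
        ring
    _ = ∑ k' ∈ Kfin n ϖ, ∑ l' : Fin n, ∑ l : Fin n,
            ((1/(n:ℝ)) * z l') * (Real.cos (2 * Real.pi * (k':ℕ) * (((l:ℕ):ℝ) - ((l':ℕ):ℝ)) / n)
              * Real.cos (2 * Real.pi * (k:ℕ) * (((j:ℕ):ℝ) - ((l:ℕ):ℝ)) / n)) := by
        rw [Finset.sum_comm]
        apply Finset.sum_congr rfl
        intro k' _
        rw [Finset.sum_comm]
    _ = ∑ l' : Fin n, ∑ k' ∈ Kfin n ϖ,
            ((1/(n:ℝ)) * z l') *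
            ((if (n:ℤ) ∣ (((k:ℕ) + (k':ℕ) : ℕ) : ℤ) then
        (n/2 : ℝ) * Real.cos (2 * Real.pi * ((k':ℝ)*((l':ℕ):ℝ) + (k:ℝ)*((j:ℕ):ℝ)) / n) else 0)
      + (if k' = k then (n/2 : ℝ) * Real.cos (2 * Real.pi * (k:ℕ) * (((j:ℕ):ℝ) - ((l':ℕ):ℝ)) / n) else 0)) := by
        rw [Finset.sum_comm]
        apply Finset.sum_congr rfl
        intro l' _
        apply Finset.sum_congr rfl
        intro k' _
        rw [← Finset.mul_sum, key_l_sum n hn k k' ((j:ℕ):ℝ) ((l':ℕ):ℝ)]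
    _ = ∑ l' : Fin n, z l' * Real.cos (2 * Real.pi * (k:ℕ) * (((j:ℕ):ℝ) - ((l':ℕ):ℝ)) / n) := by
        apply Finset.sum_congr rfl
        intro l' _
        rw [← Finset.mul_sum, key_k_sum hn hϖ k hk ((j:ℕ):ℝ) (l':ℕ)]
        field_simp

lemma pband_idem (hn : 0 < n) (hϖ : 1 ≤ ϖ) (z : EuclideanSpace ℝ (Fin n)) :
    Pband n ϖ (Pband n ϖ z) = Pband n ϖ z := by
  ext j
  rw [pband_apply, pband_apply]
  congr 1
  apply Finset.sum_congr rfl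
  intro k hk
  exact inner_swap hn hϖ z j hk

lemma pband_add (x y : EuclideanSpace ℝ (Fin n)) :
    Pband n ϖ (x + y) = Pband n ϖ x + Pband n ϖ y := by
  ext j
  have : (x + y) j = x j + y j := rfl
  simp only [PiLp.add_apply, pband_apply]
  rw [← mul_add, ← Finset.sum_add_distrib]
  congr 1
  apply Finset.sum_congr rfl; intro k _
  rw [← Finset.sum_add_distrib]
  apply Finset.sum_congr rfl; intro l _
  ring

lemma pband_smul (c : ℝ) (x : EuclideanSpace ℝ (Fin n)) :
    Pband n ϖ (c • x) = c • Pband n ϖ x := by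
  ext j
  simp only [PiLp.smul_apply, pband_apply, smul_eq_mul, Finset.mul_sum]
  apply Finset.sum_congr rfl; intro k _
  apply Finset.sum_congr rfl; intro l _
  ring

lemma pband_selfadj (x y : EuclideanSpace ℝ (Fin n)) :
    (inner ℝ (Pband n ϖ x) y : ℝ) = inner ℝ x (Pband n ϖ y) := by
  rw [euc_inner, euc_inner]
  have lhs : ∑ j, (Pband n ϖ x) j * y j
      = ∑ k ∈ Kfin n ϖ, ∑ j : Fin n, ∑ l : Fin n,
          (1/(n:ℝ)) * (x l * y j * Real.cos (2 * Real.pi * (k:ℕ) * (((j:ℕ):ℝ) - ((l:ℕ):ℝ)) / n)) := by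
    rw [Finset.sum_comm]
    apply Finset.sum_congr rfl; intro j _
    rw [pband_apply, mul_assoc, Finset.sum_mul, Finset.mul_sum]
    apply Finset.sum_congr rfl; intro k _
    rw [Finset.sum_mul, Finset.mul_sum]
    apply Finset.sum_congr rfl; intro l _
    ring
  have rhs : ∑ l, x l * (Pband n ϖ y) l
      = ∑ k ∈ Kfin n ϖ, ∑ l : Fin n, ∑ j : Fin n,
          (1/(n:ℝ)) * (x l * y j * Real.cos (2 * Real.pi * (k:ℕ) * (((j:ℕ):ℝ) - ((l:ℕ):ℝ)) / n)) := by
    rw [Finset.sum_comm]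
    apply Finset.sum_congr rfl; intro l _
    rw [pband_apply, mul_comm (x l), mul_assoc, Finset.sum_mul, Finset.mul_sum]
    apply Finset.sum_congr rfl; intro k _
    rw [Finset.sum_mul, Finset.mul_sum]
    apply Finset.sum_congr rfl; intro j _
    rw [show Real.cos (2 * Real.pi * (k:ℕ) * (((l:ℕ):ℝ) - ((j:ℕ):ℝ)) / n)
        = Real.cos (2 * Real.pi * (k:ℕ) * (((j:ℕ):ℝ) - ((l:ℕ):ℝ)) / n) by
      rw [← Real.cos_neg (2 * Real.pi * (k:ℕ) * (((j:ℕ):ℝ) - ((l:ℕ):ℝ)) / n)]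
      congr 1; ring]
    ring
  rw [lhs, rhs]
  apply Finset.sum_congr rfl; intro k _
  exact Finset.sum_comm

/-- constant vectors are fixed by the filter -/
lemma pband_const (hn : 0 < n) (hϖ : 1 ≤ ϖ) (c : ℝ) :
    Pband n ϖ ((WithLp.equiv 2 (Fin n → ℝ)).symm (fun _ => c)) =
      (WithLp.equiv 2 (Fin n → ℝ)).symm (fun _ => c) := by
  ext j
  rw [pband_apply]
  have hzero : (⟨0, hn⟩ : Fin n) ∈ Kfin n ϖ := by rw [mem_Kfin]; left; simp
  have inner_eq : ∀ k : Fin n,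
      (∑ l : Fin n, ((WithLp.equiv 2 (Fin n → ℝ)).symm (fun _ => c) : EuclideanSpace ℝ (Fin n)) l *
        Real.cos (2 * Real.pi * (k : ℕ) * (((j : ℕ) : ℝ) - ((l : ℕ) : ℝ)) / (n : ℝ)))
      = if k = (⟨0, hn⟩ : Fin n) then c * n else 0 := by
    intro k
    have : ∀ l : Fin n,
        ((WithLp.equiv 2 (Fin n → ℝ)).symm (fun _ => c) : EuclideanSpace ℝ (Fin n)) l *
          Real.cos (2 * Real.pi * (k : ℕ) * (((j : ℕ) : ℝ) - ((l : ℕ) : ℝ)) / (n : ℝ))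
        = c * Real.cos (2 * Real.pi * (-(k:ℕ) : ℤ) / n * l + 2 * Real.pi * (k:ℕ) * (j:ℕ) / n) := by
      intro l
      rw [show ((WithLp.equiv 2 (Fin n → ℝ)).symm (fun _ => c) : EuclideanSpace ℝ (Fin n)) l = c from rfl]
      congr 2
      push_cast
      ring
    simp only [this]
    rw [← Finset.mul_sum, sum_cos n hn (-(k:ℕ) : ℤ) _]
    have hdvd_iff : ((n:ℤ) ∣ (-(k:ℕ) : ℤ)) ↔ k = (⟨0, hn⟩ : Fin n) := by
      rw [Int.dvd_neg]
      constructor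
      · intro h
        have h' : n ∣ (k:ℕ) := by exact_mod_cast h
        exact Fin.ext (Nat.eq_zero_of_dvd_of_lt h' k.2)
      · rintro rfl; simp
    split_ifs with h1 h2 h2
    · rw [h2] at h1 ⊢
      simp only [Fin.val_mk]
      norm_num
    · exact absurd (hdvd_iff.mp h1) h2
    · exact absurd (hdvd_iff.mpr h2) h1
    · ring
  rw [show ∑ k ∈ Kfin n ϖ, _ = _ from Finset.sum_congr rfl (fun k _ => inner_eq k)]
  rw [Finset.sum_ite_eq' (Kfin n ϖ) (⟨0, hn⟩ : Fin n), if_pos hzero]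
  show (1 / (n:ℝ)) * (c * n) = c
  field_simp

lemma pband_bandlimited (hn : 0 < n) (hϖ : 1 ≤ ϖ) (z : EuclideanSpace ℝ (Fin n)) (k : Fin n)
    (hk : ¬((k : ℕ) ≤ ϖ - 1 ∨ n - ϖ + 1 ≤ (k : ℕ))) :
    ∑ j : Fin n, ((Pband n ϖ z j : ℝ) : ℂ) *
      Complex.exp (-(2 * (Real.pi : ℂ) * Complex.I * ((j : ℕ) : ℂ) * ((k : ℕ) : ℂ)) / (n : ℂ)) = 0 := by
  push_neg at hk
  obtain ⟨hk1, hk2⟩ := hk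
  have hnC : (n:ℂ) ≠ 0 := by
    exact Nat.cast_ne_zero.mpr hn.ne'
  have expand : ∀ j : Fin n, ((Pband n ϖ z j : ℝ) : ℂ) *
      Complex.exp (-(2 * (Real.pi : ℂ) * Complex.I * ((j : ℕ) : ℂ) * ((k : ℕ) : ℂ)) / (n : ℂ))
      = ∑ k' ∈ Kfin n ϖ, ∑ l : Fin n, ((1/(n:ℂ)) * (z l : ℂ) / 2) *
          (Complex.exp ((2 * Real.pi * ((((k':ℕ):ℤ) - ((k:ℕ):ℤ)):ℝ) / n : ℝ) * Complex.I * (j:ℕ)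
              + (-(2 * Real.pi * (k':ℕ) * (l:ℕ) / n : ℝ) * Complex.I))
           + Complex.exp ((2 * Real.pi * ((-(((k':ℕ):ℤ) + ((k:ℕ):ℤ))):ℝ) / n : ℝ) * Complex.I * (j:ℕ)
              + ((2 * Real.pi * (k':ℕ) * (l:ℕ) / n : ℝ) * Complex.I))) := by
    intro j
    rw [pband_apply]
    push_cast [Complex.ofReal_cos]
    rw [mul_assoc, Finset.sum_mul, Finset.mul_sum]
    apply Finset.sum_congr rfl; intro k' _
    rw [Finset.sum_mul, Finset.mul_sum]
    apply Finset.sum_congr rfl; intro l _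
    rw [Complex.cos]
    have e1 : Complex.exp (2 * (Real.pi:ℂ) * (k':ℕ) * ((j:ℕ) - (l:ℕ)) / n * Complex.I) *
        Complex.exp (-(2 * (Real.pi:ℂ) * Complex.I * (j:ℕ) * (k:ℕ)) / n)
        = Complex.exp (2 * (Real.pi:ℂ) * (((k':ℕ):ℝ) - ((k:ℕ):ℝ) : ℝ) / n * Complex.I * (j:ℕ)
            + (-(2 * Real.pi * (k':ℕ) * (l:ℕ) / n : ℝ) : ℂ) * Complex.I) := by
      rw [← Complex.exp_add]; congr 1; push_cast; field_simp; ring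
    have e2 : Complex.exp (-(2 * (Real.pi:ℂ) * (k':ℕ) * ((j:ℕ) - (l:ℕ)) / n) * Complex.I) *
        Complex.exp (-(2 * (Real.pi:ℂ) * Complex.I * (j:ℕ) * (k:ℕ)) / n)
        = Complex.exp (2 * (Real.pi:ℂ) * (-(((k':ℕ):ℝ) + ((k:ℕ):ℝ)) : ℝ) / n * Complex.I * (j:ℕ)
            + ((2 * Real.pi * (k':ℕ) * (l:ℕ) / n : ℝ) : ℂ) * Complex.I) := by
      rw [← Complex.exp_add]; congr 1; push_cast; field_simp; ring
    push_cast at e1 e2 ⊢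
    rw [← e1, ← e2]
    ring
  rw [Finset.sum_congr rfl (fun j _ => expand j)]
  rw [Finset.sum_comm]
  apply Finset.sum_eq_zero
  intro k' hk'
  rw [Finset.sum_comm]
  apply Finset.sum_eq_zero
  intro l _
  rw [← Finset.mul_sum, Finset.sum_add_distrib]
  have hm1 : ¬ (n:ℤ) ∣ (((k':ℕ):ℤ) - ((k:ℕ):ℤ)) := by
    rw [dvd_sub_iff n k k']
    intro rfl_eq
    rw [mem_Kfin] at hk'
    subst rfl_eq
    omega
  have hm2 : ¬ (n:ℤ) ∣ (-(((k':ℕ):ℤ) + ((k:ℕ):ℤ))) := by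
    rw [Int.dvd_neg]
    intro hd
    have hd' : (n:ℤ) ∣ (((k':ℕ) + (k:ℕ) : ℕ) : ℤ) := by push_cast; exact hd
    rcases dvd_add_cases n k' k hd' with ⟨h0, h0'⟩ | hsum
    · omega
    · rw [mem_Kfin] at hk'
      have := k.2
      omega
  rw [show (∑ j : Fin n, Complex.exp ((2 * Real.pi * ((((k':ℕ):ℤ) - ((k:ℕ):ℤ)):ℝ) / n : ℝ) * Complex.I * (j:ℕ)
              + (-(2 * Real.pi * (k':ℕ) * (l:ℕ) / n : ℝ) * Complex.I)))
      = 0 from by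
    have := sum_exp_lin n hn ((((k':ℕ):ℤ) - ((k:ℕ):ℤ))) hm1 ((-(2 * Real.pi * (k':ℕ) * (l:ℕ) / n : ℝ)) * Complex.I)
    rw [← this]
    apply Finset.sum_congr rfl; intro j _
    congr 2
    push_cast
    ring]
  rw [show (∑ j : Fin n, Complex.exp ((2 * Real.pi * ((-(((k':ℕ):ℤ) + ((k:ℕ):ℤ))):ℝ) / n : ℝ) * Complex.I * (j:ℕ)
              + ((2 * Real.pi * (k':ℕ) * (l:ℕ) / n : ℝ) * Complex.I)))
      = 0 from by
    have := sum_exp_lin n hn (-(((k':ℕ):ℤ) + ((k:ℕ):ℤ))) hm2 (((2 * Real.pi * (k':ℕ) * (l:ℕ) / n : ℝ)) * Complex.I)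
    rw [← this]
    apply Finset.sum_congr rfl; intro j _
    congr 2
    push_cast
    ring]
  simp

lemma pgeq_mem (s z : EuclideanSpace ℝ (Fin n)) : Pgeq n s z ∈ Sgeq n s :=
  fun j => le_max_right _ _

lemma pgeq_proj (s z y : EuclideanSpace ℝ (Fin n)) (hy : y ∈ Sgeq n s) :
    (inner ℝ (z - Pgeq n s z) (y - Pgeq n s z) : ℝ) ≤ 0 := by
  rw [euc_inner]
  apply Finset.sum_nonpos
  intro j _
  have h1 : (z - Pgeq n s z) j = z j - max (z j) |s j| := rfl
  have h2 : (y - Pgeq n s z) j = y j - max (z j) |s j| := rfl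
  rw [h1, h2]
  rcases le_total (|s j|) (z j) with h | h
  · rw [max_eq_left h]; simp
  · rw [max_eq_right h]
    apply mul_nonpos_of_nonpos_of_nonneg
    · linarith
    · linarith [hy j]

lemma pgeq_contract (s z y : EuclideanSpace ℝ (Fin n)) (hy : y ∈ Sgeq n s) :
    ‖Pgeq n s z - y‖^2 + ‖Pgeq n s z - z‖^2 ≤ ‖z - y‖^2 := by
  have hexp : ‖z - y‖^2 = ‖z - Pgeq n s z‖^2
      + 2 * (inner ℝ (z - Pgeq n s z) (Pgeq n s z - y) : ℝ) + ‖Pgeq n s z - y‖^2 := by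
    rw [show z - y = (z - Pgeq n s z) + (Pgeq n s z - y) by abel]
    exact norm_add_sq_real _ _
  have hproj := pgeq_proj s z y hy
  have hswap : (inner ℝ (z - Pgeq n s z) (Pgeq n s z - y) : ℝ)
      = - (inner ℝ (z - Pgeq n s z) (y - Pgeq n s z) : ℝ) := by
    rw [show Pgeq n s z - y = -(y - Pgeq n s z) by abel, inner_neg_right]
  have hnorm2 : ‖Pgeq n s z - z‖^2 = ‖z - Pgeq n s z‖^2 := by rw [norm_sub_rev]
  linarith

set_option maxHeartbeats 1600000 in
/-- the AP-A (accelerated) iteration converges monotonically to some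
`m† ∈ S_{≥|s|} ∩ S_ϖ`. -/
theorem APA_monotone_convergence
    (n ϖ : ℕ) (hn : 1 ≤ n) (hϖ : 1 ≤ ϖ) (s : EuclideanSpace ℝ (Fin n))
    (a m b : ℕ → EuclideanSpace ℝ (Fin n)) (lam : ℕ → ℝ)
    (ha0 : a 0 = 0) (hm0 : m 0 = Pgeq n s (a 0))
    (hb : ∀ i, b (i + 1) = Pband n ϖ (m i - a i))
    (hlam : ∀ i, b (i + 1) ≠ 0 → lam (i + 1) = ‖m i - a i‖ ^ 2 / ‖b (i + 1)‖ ^ 2)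
    (hlam0 : ∀ i, b (i + 1) = 0 → lam (i + 1) = 0)
    (ha : ∀ i, a (i + 1) = a i + lam (i + 1) • b (i + 1))
    (hm : ∀ i, m (i + 1) = Pgeq n s (a (i + 1)))
    (hb0 : ∀ i, b (i + 1) = 0 → m i = a i) :
    ∃ mdag ∈ Sgeq n s ∩ Sband n ϖ,
      Filter.Tendsto m Filter.atTop (nhds mdag) ∧
      ∀ i, ‖m (i + 1) - mdag‖ ≤ ‖m i - mdag‖ := by
  have hn0 : 0 < n := hn
  -- basic algebra for Pband
  have pband_zero : Pband n ϖ (0 : EuclideanSpace ℝ (Fin n)) = 0 := by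
    have := pband_smul (n := n) (ϖ := ϖ) (0:ℝ) 0
    simpa using this
  have pband_sub : ∀ x y : EuclideanSpace ℝ (Fin n),
      Pband n ϖ (x - y) = Pband n ϖ x - Pband n ϖ y := by
    intro x y
    rw [sub_eq_add_neg, show -y = (-1 : ℝ) • y by simp, pband_add, pband_smul]
    simp [sub_eq_add_neg]
  -- a i fixed by Pband
  have haV : ∀ i, Pband n ϖ (a i) = a i := by
    intro i
    induction i with
    | zero => rw [ha0, pband_zero]
    | succ i ih =>
      rw [ha i, pband_add, pband_smul, ih, hb i, pband_idem hn0 hϖ]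
  -- m i = Pgeq (a i)
  have hmP : ∀ i, m i = Pgeq n s (a i) := by
    intro i
    cases i with
    | zero => exact hm0
    | succ i => exact hm i
  have hmC : ∀ i, m i ∈ Sgeq n s := fun i => (hmP i) ▸ pgeq_mem s (a i)
  -- master step inequality
  have step : ∀ y : EuclideanSpace ℝ (Fin n), y ∈ Sgeq n s → Pband n ϖ y = y → ∀ i,
      ‖m (i+1) - y‖^2 + ‖m (i+1) - a (i+1)‖^2 ≤ ‖m i - y‖^2 := by
    intro y hyC hyV i
    have hfin := pgeq_contract s (a (i+1)) y hyC
    rw [← hm i] at hfin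
    by_cases hbz : b (i+1) = 0
    · have hma : m i = a i := hb0 i hbz
      have hai : a (i+1) = a i := by rw [ha i, hlam0 i hbz]; simp
      rw [hai, ← hma] at hfin
      rw [hai, ← hma]
      exact hfin
    · set u := m i - a i with hu
      have hbP : b (i+1) = Pband n ϖ u := hb i
      have hub : (inner ℝ u (b (i+1)) : ℝ) = ‖b (i+1)‖^2 := by
        rw [hbP]
        have h1 : (inner ℝ (Pband n ϖ u) (Pband n ϖ u) : ℝ) = inner ℝ u (Pband n ϖ (Pband n ϖ u)) :=
          pband_selfadj _ _
        rw [pband_idem hn0 hϖ] at h1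
        rw [← h1, real_inner_self_eq_norm_sq]
      have hbpos : 0 < ‖b (i+1)‖ := norm_pos_iff.mpr hbz
      have hb_le : ‖b (i+1)‖ ≤ ‖u‖ := by
        have hcs := real_inner_le_norm u (b (i+1))
        nlinarith
      have hlam1 : 1 ≤ lam (i+1) := by
        rw [hlam i hbz]
        rw [le_div_iff₀ (by positivity)]
        nlinarith
      have hlamu : lam (i+1) * ‖b (i+1)‖^2 = ‖u‖^2 := by
        rw [hlam i hbz]; field_simp; rw [hu]
      have hinner_b : (inner ℝ (a i - y) (b (i+1)) : ℝ) = inner ℝ (a i - y) u := by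
        rw [real_inner_comm, hbP,
          pband_selfadj u (a i - y)]
        rw [pband_sub, haV i, hyV]
        exact real_inner_comm _ _
      have hproj : (inner ℝ u (m i - y) : ℝ) ≤ 0 := by
        have hp := pgeq_proj s (a i) y hyC
        rw [← hmP i] at hp
        calc (inner ℝ u (m i - y) : ℝ) = inner ℝ (a i - m i) (y - m i) := by
              rw [show u = -(a i - m i) by rw [hu]; abel,
                show m i - y = -(y - m i) by abel, inner_neg_neg]
          _ ≤ 0 := hp
      have expand1 : ‖a (i+1) - y‖^2 = ‖a i - y‖^2
          + 2 * (lam (i+1) * (inner ℝ (a i - y) (b (i+1)) : ℝ)) + (lam (i+1))^2 * ‖b (i+1)‖^2 := by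
        rw [ha i, show a i + lam (i+1) • b (i+1) - y = (a i - y) + lam (i+1) • b (i+1) by abel,
          norm_add_sq_real, real_inner_smul_right, norm_smul]
        simp [Real.norm_eq_abs, mul_pow, sq_abs]
      have expand2 : ‖m i - y‖^2 = ‖a i - y‖^2 + 2 * (inner ℝ (a i - y) u : ℝ) + ‖u‖^2 := by
        rw [show m i - y = (a i - y) + u by rw [hu]; abel, norm_add_sq_real]
      have hc : (inner ℝ (a i - y) u : ℝ) = inner ℝ u (m i - y) - ‖u‖^2 := by
        rw [real_inner_comm]
        rw [show (inner ℝ u (a i - y) : ℝ) = inner ℝ u ((m i - y) - u) from by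
          congr 1; rw [hu]; abel]
        rw [inner_sub_right, real_inner_self_eq_norm_sq]
      have hcompare : ‖a (i+1) - y‖^2 ≤ ‖m i - y‖^2 := by
        rw [expand1, expand2, hinner_b]
        have h1 : (lam (i+1))^2 * ‖b (i+1)‖^2 = lam (i+1) * ‖u‖^2 := by
          rw [pow_two, mul_assoc, hlamu]
        rw [h1, hc]
        have hkey : ∀ (A L c uu : ℝ), 0 ≤ uu → 1 ≤ L → c ≤ 0 →
            A + 2 * (L * (c - uu)) + L * uu ≤ A + 2 * (c - uu) + uu := by
          intro A L c uu h1' h2' h3'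
          nlinarith
        exact hkey _ _ _ _ (sq_nonneg ‖u‖) hlam1 hproj
      linarith
  -- feasible point y₀
  set M : ℝ := ∑ j, |s j| with hM
  set y₀ : EuclideanSpace ℝ (Fin n) := (WithLp.equiv 2 (Fin n → ℝ)).symm (fun _ => M) with hy₀
  have hy₀C : y₀ ∈ Sgeq n s := by
    intro j
    have : y₀ j = M := rfl
    rw [this, hM]
    exact Finset.single_le_sum (f := fun j => |s j|) (fun j _ => abs_nonneg _) (mem_univ j)
  have hy₀V : Pband n ϖ y₀ = y₀ := pband_const hn0 hϖ M
  -- antitone distances for feasible points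
  have anti : ∀ y : EuclideanSpace ℝ (Fin n), y ∈ Sgeq n s → Pband n ϖ y = y →
      ∀ i j, i ≤ j → ‖m j - y‖ ≤ ‖m i - y‖ := by
    intro y hyC hyV
    have hstep : ∀ i, ‖m (i+1) - y‖ ≤ ‖m i - y‖ := by
      intro i
      have := step y hyC hyV i
      have h2 : ‖m (i+1) - y‖^2 ≤ ‖m i - y‖^2 := by nlinarith [sq_nonneg ‖m (i+1) - a (i+1)‖]
      exact le_of_pow_le_pow_left₀ two_ne_zero (norm_nonneg _) h2
    exact fun i j hij => antitone_nat_of_succ_le (f := fun i => ‖m i - y‖) hstep hij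
  -- boundedness of m
  have hball : ∀ i, m i ∈ Metric.closedBall y₀ ‖m 0 - y₀‖ := by
    intro i
    rw [Metric.mem_closedBall, dist_eq_norm]
    exact anti y₀ hy₀C hy₀V 0 i (Nat.zero_le i)
  -- compactness: convergent subsequence
  obtain ⟨zpt, hz_mem, φ, hφ, hconv⟩ :=
    (isCompact_closedBall y₀ ‖m 0 - y₀‖).tendsto_subseq hball
  -- summability of ‖m (i+1) - a (i+1)‖^2
  have htel : ∀ N, (∑ i ∈ Finset.range N, ‖m (i+1) - a (i+1)‖^2) + ‖m N - y₀‖^2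
      ≤ ‖m 0 - y₀‖^2 := by
    intro N
    induction N with
    | zero => simp
    | succ N ih =>
      rw [Finset.sum_range_succ]
      have := step y₀ hy₀C hy₀V N
      linarith
  have hsummable : Summable (fun i => ‖m (i+1) - a (i+1)‖^2) := by
    apply summable_of_sum_range_le (c := ‖m 0 - y₀‖^2) (fun i => by positivity)
    intro N
    have := htel N
    nlinarith [sq_nonneg ‖m N - y₀‖]
  have hu0 : Filter.Tendsto (fun i => m i - a i) Filter.atTop (nhds 0) := by
    rw [← Filter.tendsto_add_atTop_iff_nat 1]
    rw [tendsto_zero_iff_norm_tendsto_zero]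
    have hsq := hsummable.tendsto_atTop_zero
    have : Filter.Tendsto (fun i => Real.sqrt (‖m (i+1) - a (i+1)‖^2)) Filter.atTop (nhds (Real.sqrt 0)) :=
      hsq.sqrt
    simpa [Real.sqrt_sq (norm_nonneg _)] using this
  -- a ∘ φ tends to zpt
  have hz_a : Filter.Tendsto (fun k => a (φ k)) Filter.atTop (nhds zpt) := by
    have h1 : Filter.Tendsto (fun k => m (φ k) - a (φ k)) Filter.atTop (nhds 0) :=
      hu0.comp hφ.tendsto_atTop
    have h2 : Filter.Tendsto (fun k => m (φ k) - (m (φ k) - a (φ k))) Filter.atTop (nhds (zpt - 0)) :=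
      hconv.sub h1
    simpa using h2
  -- continuity of Pband via linearity
  have hPcont : Continuous (Pband n ϖ) := by
    let PL : EuclideanSpace ℝ (Fin n) →ₗ[ℝ] EuclideanSpace ℝ (Fin n) :=
      { toFun := Pband n ϖ, map_add' := pband_add, map_smul' := pband_smul }
    exact PL.continuous_of_finiteDimensional
  -- zpt fixed by Pband
  have hzV : Pband n ϖ zpt = zpt := by
    have h1 : Filter.Tendsto (fun k => Pband n ϖ (a (φ k))) Filter.atTop (nhds (Pband n ϖ zpt)) :=
      (hPcont.tendsto zpt).comp hz_a
    have h2 : (fun k => Pband n ϖ (a (φ k))) = fun k => a (φ k) := by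
      funext k; exact haV (φ k)
    rw [h2] at h1
    exact tendsto_nhds_unique h1 hz_a
  -- zpt ∈ Sgeq
  have hCclosed : IsClosed (Sgeq n s) := by
    have : Sgeq n s = ⋂ j, {x : EuclideanSpace ℝ (Fin n) | |s j| ≤ x j} := by
      ext x; simp [Sgeq, Set.mem_iInter]
    rw [this]
    apply isClosed_iInter
    intro j
    have hcont : Continuous (fun x : EuclideanSpace ℝ (Fin n) => x j) := by
      let ev : EuclideanSpace ℝ (Fin n) →ₗ[ℝ] ℝ :=
        { toFun := fun x => x j, map_add' := fun x y => rfl, map_smul' := fun c x => rfl }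
      exact ev.continuous_of_finiteDimensional
    exact isClosed_le continuous_const hcont
  have hzC : zpt ∈ Sgeq n s :=
    hCclosed.mem_of_tendsto hconv (Filter.Eventually.of_forall (fun k => hmC (φ k)))
  -- distances to zpt tend to 0
  have hdist_anti : ∀ i, ‖m (i+1) - zpt‖ ≤ ‖m i - zpt‖ := by
    intro i
    have := step zpt hzC hzV i
    have h2 : ‖m (i+1) - zpt‖^2 ≤ ‖m i - zpt‖^2 := by nlinarith [sq_nonneg ‖m (i+1) - a (i+1)‖]
    exact le_of_pow_le_pow_left₀ two_ne_zero (norm_nonneg _) h2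
  have hanti : Antitone (fun i => ‖m i - zpt‖) := antitone_nat_of_succ_le hdist_anti
  have hbdd : BddBelow (Set.range (fun i => ‖m i - zpt‖)) :=
    ⟨0, by rintro x ⟨i, rfl⟩; exact norm_nonneg _⟩
  have hdL : Filter.Tendsto (fun i => ‖m i - zpt‖) Filter.atTop (nhds (⨅ i, ‖m i - zpt‖)) :=
    tendsto_atTop_ciInf hanti hbdd
  have hsub0 : Filter.Tendsto (fun k => ‖m (φ k) - zpt‖) Filter.atTop (nhds 0) :=
    tendsto_iff_norm_sub_tendsto_zero.mp hconv
  have hIinf0 : (⨅ i, ‖m i - zpt‖) = 0 :=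
    tendsto_nhds_unique (hdL.comp hφ.tendsto_atTop) hsub0
  have hm_tendsto : Filter.Tendsto m Filter.atTop (nhds zpt) := by
    rw [tendsto_iff_norm_sub_tendsto_zero, ← hIinf0]
    exact hdL
  have hzSband : zpt ∈ Sband n ϖ := by
    intro k hk
    have hk' : ¬((k : ℕ) ≤ ϖ - 1 ∨ n - ϖ + 1 ≤ (k : ℕ)) := fun hc => hk hc
    have hbl := pband_bandlimited hn0 hϖ zpt k hk'
    rw [hzV] at hbl
    exact hbl
  exact ⟨zpt, ⟨hzC, hzSband⟩, hm_tendsto, hdist_anti⟩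

end
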